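/- Let W be a real m × d matrix and define the one-layer ReLU network f : ℝ^d → ℝ with all biases equal to −1 (hence non-positive) by f(x) = ∑_{j=1}^m [(Wx)_j − 1]^+, where [·]^+ = max(·, 0). Then f vanishes identically on a neighborhood of the origin, f is differentiable at 0 with ∇f(0) = 0, and consequently for every input x at which f is differentiable with ∇f(x) ≠ 0, the origin does not lie in the linear region of f at x, i.e., 0 ∉ N_f(x); so the origin is not an admissible root point for such x, refuting the claim that non-positive biases guarantee that the origin is a valid root point. -/

import Mathlib

noncomputable section

/-- A piecewise-C¹ path on `[0,1]`: continuous on `[0,1]` and C¹ off a finite set. -/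
def PiecewiseC1 {p : ℕ} (γ : ℝ → (Fin p → ℝ)) : Prop :=
  ContinuousOn γ (Set.Icc 0 1) ∧
    ∃ s : Finset ℝ, ∀ t ∈ Set.Icc (0:ℝ) 1, t ∉ s → ContDiffAt ℝ 1 γ t

/-- The linear region `N_g(x)` of `g` at `x`: all points `x'` such that `g` is differentiable
at `x` and at `x'` with `∇g(x') = ∇g(x)`, and `x'` can be joined to `x` by a piecewise-C¹ path
on which `g` is differentiable with gradient constantly equal to `∇g(x)`. -/
def LinearRegion {p : ℕ} (g : (Fin p → ℝ) → ℝ) (x : Fin p → ℝ) : Set (Fin p → ℝ) :=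
  {x' | DifferentiableAt ℝ g x ∧ DifferentiableAt ℝ g x' ∧
        fderiv ℝ g x' = fderiv ℝ g x ∧
        ∃ γ : ℝ → (Fin p → ℝ), PiecewiseC1 γ ∧ γ 0 = x ∧ γ 1 = x' ∧
          ∀ t ∈ Set.Icc (0:ℝ) 1, DifferentiableAt ℝ g (γ t) ∧ fderiv ℝ g (γ t) = fderiv ℝ g x}

/-- the one-layer ReLU network `f x = ∑_j [(Wx)_j − 1]⁺` (all biases equal to
`−1`, hence non-positive) vanishes identically on a neighborhood of the origin, is
differentiable at `0` with `∇f(0) = 0`, and consequently for every input `x` at which `f` is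
differentiable with `∇f(x) ≠ 0`, the origin does not lie in the linear region `N_f(x)`; so
the origin is not an admissible root point for such `x`. -/
theorem relu_nonpositive_bias_origin_not_root
    {dd mm : ℕ} (W : Fin mm → Fin dd → ℝ)
    (f : (Fin dd → ℝ) → ℝ)
    (hf : ∀ x, f x = ∑ j, max 0 ((∑ i, W j i * x i) - 1)) :
    (∀ᶠ y in nhds (0 : Fin dd → ℝ), f y = 0) ∧
    DifferentiableAt ℝ f 0 ∧
    fderiv ℝ f 0 = 0 ∧
    (∀ x : Fin dd → ℝ, DifferentiableAt ℝ f x → fderiv ℝ f x ≠ 0 →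
      (0 : Fin dd → ℝ) ∉ LinearRegion f x) := by
  have hnhds : ∀ᶠ y in nhds (0 : Fin dd → ℝ), f y = 0 := by
    have hcont : ∀ j : Fin mm, Continuous fun y : Fin dd → ℝ => ∑ i, W j i * y i := by
      intro j
      exact continuous_finset_sum _ fun i _ => (continuous_const.mul (continuous_apply i))
    have key : ∀ᶠ y in nhds (0 : Fin dd → ℝ), ∀ j, (∑ i, W j i * y i) < 1 := by
      rw [Filter.eventually_all]
      intro j
      have h0 : (∑ i, W j i * (0 : Fin dd → ℝ) i) = 0 := by simp
      have := (hcont j).continuousAt (x := (0 : Fin dd → ℝ))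
      have := this.eventually_lt continuousAt_const (by simp [h0] : (∑ i, W j i * (0 : Fin dd → ℝ) i) < 1)
      exact this
    filter_upwards [key] with y hy
    rw [hf y]
    apply Finset.sum_eq_zero
    intro j _
    exact max_eq_left (by linarith [hy j])
  have hdiff : DifferentiableAt ℝ f 0 := by
    have : f =ᶠ[nhds (0 : Fin dd → ℝ)] (fun _ => 0) := hnhds
    exact (differentiableAt_const (0:ℝ)).congr_of_eventuallyEq this
  have hfd : fderiv ℝ f 0 = 0 := by
    have h : f =ᶠ[nhds (0 : Fin dd → ℝ)] (fun _ => 0) := hnhds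
    rw [h.fderiv_eq, fderiv_fun_const]
    rfl
  refine ⟨hnhds, hdiff, hfd, ?_⟩
  intro x _ hne hmem
  obtain ⟨_, _, heq, _⟩ := hmem
  exact hne (heq ▸ hfd)
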